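/- For every n ∈ ℤ, ∫_{‖x‖ ≤ p^n} log‖x‖ dμ(x) = (n - 1/(p - 1)) · p^n · log p. -/

import Mathlib

open MeasureTheory ENNReal NNReal

-- residue decomposition of the unit ball
lemma unit_ball_decomp (p : ℕ) [hp : Fact p.Prime] :
    {y : ℚ_[p] | ‖y‖ ≤ 1} = ⋃ j : Fin p, {y : ℚ_[p] | ‖y - (j : ℚ_[p])‖ ≤ (p : ℝ)⁻¹} := by
  ext y
  simp only [Set.mem_setOf_eq, Set.mem_iUnion]
  constructor
  · intro hy
    set z : ℤ_[p] := ⟨y, hy⟩ with hz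
    have hlt : z.appr 1 < p := by simpa using z.appr_lt 1
    refine ⟨⟨z.appr 1, hlt⟩, ?_⟩
    have h1 : ‖z - (z.appr 1 : ℤ_[p])‖ ≤ (p : ℝ) ^ (-(1:ℕ) : ℤ) :=
      ((z - (z.appr 1 : ℤ_[p])).norm_le_pow_iff_mem_span_pow 1).mpr (z.appr_spec 1)
    have h2 : ‖y - ((z.appr 1 : ℕ) : ℚ_[p])‖ = ‖z - (z.appr 1 : ℤ_[p])‖ := by
      rw [PadicInt.norm_def]; push_cast [hz]; ring_nf; rfl
    simp only [Fin.val_mk]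
    rw [h2]
    simpa using h1
  · rintro ⟨j, hj⟩
    have h1 : ‖y - (j : ℚ_[p])‖ ≤ 1 := hj.trans (by
      rw [inv_le_one_iff₀]; right; exact_mod_cast hp.out.one_lt.le)
    have h2 : ‖(j : ℚ_[p])‖ ≤ 1 := by
      have := Padic.norm_int_le_one (p := p) (j : ℤ)
      simpa using this
    calc ‖y‖ = ‖(y - (j:ℚ_[p])) + (j:ℚ_[p])‖ := by ring_nf
    _ ≤ max ‖y - (j:ℚ_[p])‖ ‖(j:ℚ_[p])‖ := Padic.nonarchimedean _ _
    _ ≤ 1 := max_le h1 h2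

lemma ball_decomp (p : ℕ) [hp : Fact p.Prime] (k : ℤ) :
    {x : ℚ_[p] | ‖x‖ ≤ (p : ℝ) ^ (k+1)} =
      ⋃ j : Fin p, {x : ℚ_[p] | ‖x - (j : ℚ_[p]) * (p : ℚ_[p]) ^ (-(k+1))‖ ≤ (p : ℝ) ^ k} := by
  have hp0 : (0:ℝ) < p := by exact_mod_cast hp.out.pos
  have hpq : ((p : ℚ_[p])) ≠ 0 := by exact_mod_cast hp.out.ne_zero
  have hnorm : ‖((p : ℚ_[p]) ^ (-(k+1)) : ℚ_[p])‖ = (p:ℝ) ^ (k+1) := by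
    rw [Padic.norm_p_zpow]; ring_nf
  have hq : ((p:ℝ) ^ k : ℝ) = (p:ℝ)⁻¹ * (p:ℝ) ^ (k+1) := by
    rw [← zpow_neg_one, ← zpow_add₀ hp0.ne']; ring_nf
  have key : ∀ x : ℚ_[p], ∀ j : Fin p,
      (‖x - (j : ℚ_[p]) * (p : ℚ_[p]) ^ (-(k+1))‖ ≤ (p : ℝ) ^ k ↔
       ‖x * (p : ℚ_[p]) ^ (k+1) - (j : ℚ_[p])‖ ≤ (p:ℝ)⁻¹) := by
    intro x j
    have hone : (p : ℚ_[p]) ^ (k+1) * (p : ℚ_[p]) ^ (-(k+1)) = 1 := by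
      rw [← zpow_add₀ hpq]; ring_nf; exact zpow_zero _
    have hsplit : x - (j : ℚ_[p]) * (p : ℚ_[p]) ^ (-(k+1))
        = (x * (p : ℚ_[p]) ^ (k+1) - (j : ℚ_[p])) * (p : ℚ_[p]) ^ (-(k+1)) := by
      linear_combination -x * hone
    rw [hsplit, norm_mul, hnorm, hq]
    exact mul_le_mul_iff_of_pos_right (by positivity)
  have hmemball : ∀ x : ℚ_[p], ‖x‖ ≤ (p:ℝ)^(k+1) ↔ ‖x * (p : ℚ_[p]) ^ (k+1)‖ ≤ 1 := by
    intro x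
    rw [norm_mul, Padic.norm_p_zpow, ← le_div_iff₀ (by positivity)]
    rw [one_div, ← zpow_neg, neg_neg]
  ext x
  have := Set.ext_iff.mp (unit_ball_decomp p) (x * (p : ℚ_[p]) ^ (k+1))
  simp only [Set.mem_setOf_eq, Set.mem_iUnion] at this ⊢
  rw [hmemball, this]
  exact exists_congr fun j => (key x j).symm

lemma ball_disjoint (p : ℕ) [hp : Fact p.Prime] (k : ℤ) :
    Pairwise (Function.onFun Disjoint
      (fun j : Fin p => {x : ℚ_[p] | ‖x - (j : ℚ_[p]) * (p : ℚ_[p]) ^ (-(k+1))‖ ≤ (p : ℝ) ^ k})) := by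
  intro i j hij
  rw [Function.onFun, Set.disjoint_left]
  intro x hxi hxj
  simp only [Set.mem_setOf_eq] at hxi hxj
  have hp0 : (0:ℝ) < p := by exact_mod_cast hp.out.pos
  apply hij
  have hd : ‖((i : ℚ_[p]) - (j : ℚ_[p])) * (p : ℚ_[p]) ^ (-(k+1))‖ ≤ (p:ℝ)^k := by
    have heq : ((i : ℚ_[p]) - (j : ℚ_[p])) * (p : ℚ_[p]) ^ (-(k+1))
        = (x - (j : ℚ_[p]) * (p : ℚ_[p]) ^ (-(k+1))) + (-(x - (i : ℚ_[p]) * (p : ℚ_[p]) ^ (-(k+1)))) := by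
      ring
    rw [heq]
    refine (Padic.nonarchimedean _ _).trans (max_le hxj ?_)
    rw [norm_neg]; exact hxi
  rw [norm_mul, Padic.norm_p_zpow, neg_neg] at hd
  have hq : ((p:ℝ) ^ k : ℝ) = (p:ℝ)⁻¹ * (p:ℝ) ^ (k+1) := by
    rw [← zpow_neg_one, ← zpow_add₀ hp0.ne']; ring_nf
  rw [hq] at hd
  have h1 : ‖((i : ℚ_[p]) - (j : ℚ_[p]))‖ ≤ (p:ℝ)⁻¹ :=
    (mul_le_mul_iff_of_pos_right (by positivity)).mp hd
  have h2 : ‖(((i:ℤ) - (j:ℤ) : ℤ) : ℚ_[p])‖ < 1 := by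
    push_cast
    refine h1.trans_lt ?_
    rw [inv_lt_one_iff₀]; right; exact_mod_cast hp.out.one_lt
  rw [Padic.norm_intCast_lt_one_iff] at h2
  have hd0 : (i:ℤ) - (j:ℤ) = 0 := by
    by_contra h0
    have hle := Int.le_of_dvd (abs_pos.mpr h0) ((dvd_abs _ _).mpr h2)
    have : |(i:ℤ) - (j:ℤ)| < p := by
      rw [abs_sub_lt_iff]
      constructor <;> [skip; skip] <;>
        · have := i.isLt; have := j.isLt; omega
    omega
  have : (i : ℕ) = (j : ℕ) := by omega
  exact Fin.ext this

lemma measure_ball_succ (p : ℕ) [hp : Fact p.Prime] [MeasurableSpace ℚ_[p]] [BorelSpace ℚ_[p]]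
    (μ : Measure ℚ_[p]) [μ.IsAddHaarMeasure] (k : ℤ) :
    μ {x : ℚ_[p] | ‖x‖ ≤ (p : ℝ) ^ (k+1)} = p * μ {x : ℚ_[p] | ‖x‖ ≤ (p : ℝ) ^ k} := by
  rw [ball_decomp p k]
  rw [measure_iUnion (ball_disjoint p k) (fun j => by
    exact (isClosed_le (by continuity) continuous_const).measurableSet)]
  have htrans : ∀ j : Fin p,
      μ {x : ℚ_[p] | ‖x - (j : ℚ_[p]) * (p : ℚ_[p]) ^ (-(k+1))‖ ≤ (p : ℝ) ^ k}
        = μ {x : ℚ_[p] | ‖x‖ ≤ (p : ℝ) ^ k} := by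
    intro j
    set c : ℚ_[p] := (j : ℚ_[p]) * (p : ℚ_[p]) ^ (-(k+1))
    have : {x : ℚ_[p] | ‖x - c‖ ≤ (p : ℝ) ^ k}
        = (fun x => x + (-c)) ⁻¹' {x : ℚ_[p] | ‖x‖ ≤ (p : ℝ) ^ k} := by
      ext x; simp [sub_eq_add_neg]
    rw [this, measure_preimage_add_right]
  simp_rw [htrans]
  rw [tsum_fintype]
  simp [Finset.sum_const, mul_comm]

lemma measure_ball_eq (p : ℕ) [hp : Fact p.Prime] [MeasurableSpace ℚ_[p]] [BorelSpace ℚ_[p]]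
    (μ : Measure ℚ_[p]) [μ.IsAddHaarMeasure]
    (hμ : μ {x : ℚ_[p] | ‖x‖ ≤ 1} = 1) (k : ℤ) :
    μ {x : ℚ_[p] | ‖x‖ ≤ (p : ℝ) ^ k} = (p : ℝ≥0∞) ^ k := by
  have hp0 : (p : ℝ≥0∞) ≠ 0 := by exact_mod_cast hp.out.ne_zero
  have hpt : (p : ℝ≥0∞) ≠ ⊤ := ENNReal.natCast_ne_top p
  have hstep : ∀ m : ℤ, (p:ℝ≥0∞) ^ (m+1) = p * (p:ℝ≥0∞) ^ m := by
    intro m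
    rw [ENNReal.zpow_add hp0 hpt m 1, zpow_one, mul_comm]
  induction k using Int.induction_on with
  | zero => simpa using hμ
  | succ k ih =>
      rw [measure_ball_succ p μ k, ih, ← hstep]
  | pred k ih =>
      have h := measure_ball_succ p μ (-(k:ℤ) - 1)
      rw [show (-(k:ℤ) - 1 + 1 : ℤ) = -(k:ℤ) by ring, ih] at h
      rw [show (-(k:ℤ)) = (-(k:ℤ)-1) + 1 by ring, hstep] at h
      rw [show (-(k:ℤ) - 1 + 1 - 1 : ℤ) = -(k:ℤ) - 1 by ring] at h
      exact (ENNReal.mul_right_inj hp0 hpt).mp h.symm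

lemma sphere_eq_diff (p : ℕ) [hp : Fact p.Prime] (m : ℤ) :
    {x : ℚ_[p] | ‖x‖ = (p : ℝ) ^ m}
      = {x : ℚ_[p] | ‖x‖ ≤ (p : ℝ) ^ m} \ {x : ℚ_[p] | ‖x‖ ≤ (p : ℝ) ^ (m-1)} := by
  have hp1 : (1:ℝ) < p := by exact_mod_cast hp.out.one_lt
  ext x
  simp only [Set.mem_setOf_eq, Set.mem_diff, not_le]
  constructor
  · intro h
    refine ⟨le_of_eq h, ?_⟩
    rw [h]
    exact zpow_lt_zpow_right₀ hp1 (by omega)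
  · rintro ⟨h1, h2⟩
    have hx0 : x ≠ 0 := by
      rintro rfl
      simp only [norm_zero] at h2
      exact absurd h2 (not_lt.mpr (by positivity))
    rw [Padic.norm_eq_zpow_neg_valuation hx0] at h1 h2 ⊢
    have hle : -x.valuation ≤ m := by
      exact_mod_cast (zpow_le_zpow_iff_right₀ hp1).mp h1
    have hgt : m - 1 < -x.valuation := by
      exact_mod_cast (zpow_lt_zpow_iff_right₀ hp1).mp h2
    congr 1
    omega

lemma measure_sphere (p : ℕ) [hp : Fact p.Prime] [MeasurableSpace ℚ_[p]] [BorelSpace ℚ_[p]]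
    (μ : Measure ℚ_[p]) [μ.IsAddHaarMeasure]
    (hμ : μ {x : ℚ_[p] | ‖x‖ ≤ 1} = 1) (m : ℤ) :
    μ {x : ℚ_[p] | ‖x‖ = (p : ℝ) ^ m} = (p : ℝ≥0∞) ^ m - (p : ℝ≥0∞) ^ (m-1) := by
  have hp1 : (1:ℝ) < p := by exact_mod_cast hp.out.one_lt
  rw [sphere_eq_diff p m, measure_diff ?_ ?_ ?_]
  · rw [measure_ball_eq p μ hμ, measure_ball_eq p μ hμ]
  · intro x hx
    simp only [Set.mem_setOf_eq] at hx ⊢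
    exact hx.trans (zpow_le_zpow_right₀ hp1.le (by omega))
  · exact ((isClosed_le (by continuity) continuous_const).measurableSet).nullMeasurableSet
  · rw [measure_ball_eq p μ hμ]
    exact (ENNReal.zpow_lt_top (by exact_mod_cast hp.out.ne_zero) (ENNReal.natCast_ne_top p) _).ne

lemma measure_zero_singleton (p : ℕ) [hp : Fact p.Prime] [MeasurableSpace ℚ_[p]] [BorelSpace ℚ_[p]]
    (μ : Measure ℚ_[p]) [μ.IsAddHaarMeasure]
    (hμ : μ {x : ℚ_[p] | ‖x‖ ≤ 1} = 1) :
    μ {(0 : ℚ_[p])} = 0 := by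
  have hp1 : (1:ℝ) < p := by exact_mod_cast hp.out.one_lt
  have hle : ∀ m : ℕ, μ {(0 : ℚ_[p])} ≤ (p : ℝ≥0∞) ^ (-(m:ℤ)) := by
    intro m
    rw [← measure_ball_eq p μ hμ]
    apply measure_mono
    intro x hx
    simp only [Set.mem_singleton_iff] at hx
    subst hx
    simp only [Set.mem_setOf_eq, norm_zero]
    positivity
  have htend : Filter.Tendsto (fun m : ℕ => (p : ℝ≥0∞) ^ (-(m:ℤ))) Filter.atTop (nhds 0) := by
    have : ∀ m : ℕ, (p : ℝ≥0∞) ^ (-(m:ℤ)) = ((p : ℝ≥0∞)⁻¹) ^ m := by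
      intro m
      rw [ENNReal.zpow_neg (p : ℝ≥0∞) (m:ℤ),
        ← ENNReal.inv_pow]
      norm_cast
    simp_rw [this]
    apply ENNReal.tendsto_pow_atTop_nhds_zero_of_lt_one
    rw [ENNReal.inv_lt_one]
    exact_mod_cast hp.out.one_lt
  exact le_antisymm (ge_of_tendsto' htend hle) zero_le

theorem padic_integral_log_ball
    (p : ℕ) [Fact p.Prime]
    [MeasurableSpace ℚ_[p]] [BorelSpace ℚ_[p]]
    (μ : Measure ℚ_[p]) [μ.IsAddHaarMeasure]
    (hμ : μ {x : ℚ_[p] | ‖x‖ ≤ 1} = 1)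
    (n : ℤ) :
    ∫ x in {x : ℚ_[p] | ‖x‖ ≤ (p : ℝ) ^ n}, Real.log ‖x‖ ∂μ
      = ((n : ℝ) - 1 / ((p : ℝ) - 1)) * (p : ℝ) ^ n * Real.log p := by
  have hp := Fact.out (p := p.Prime)
  have hp1 : (1:ℝ) < p := by exact_mod_cast hp.one_lt
  have hp0 : (0:ℝ) < p := by positivity
  set S : ℕ → Set ℚ_[p] := fun k => {x : ℚ_[p] | ‖x‖ = (p : ℝ) ^ ((n:ℤ) - k)} with hS
  -- measurability
  have hSmeas : ∀ k, MeasurableSet (S k) := fun k =>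
    (isClosed_eq (by continuity) continuous_const).measurableSet
  -- disjointness
  have hSdisj : Pairwise (Function.onFun Disjoint S) := by
    intro i j hij
    rw [Function.onFun, Set.disjoint_left]
    intro x hxi hxj
    simp only [hS, Set.mem_setOf_eq] at hxi hxj
    rw [hxi] at hxj
    have := (zpow_right_injective₀ hp0 hp1.ne' hxj.symm)
    omega
  -- ae equality of ball and union of spheres
  have hU : {x : ℚ_[p] | ‖x‖ ≤ (p : ℝ) ^ n} =ᵐ[μ] ⋃ k, S k := by
    rw [Filter.eventuallyEq_set]
    have hsub : {x : ℚ_[p] | ‖x‖ ≤ (p : ℝ) ^ n} \ {(0:ℚ_[p])} ⊆ ⋃ k, S k := by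
      intro x hx
      obtain ⟨hx1, hx2⟩ := hx
      simp only [Set.mem_singleton_iff] at hx2
      rw [Set.mem_setOf_eq, Padic.norm_eq_zpow_neg_valuation hx2] at hx1
      have hle : -x.valuation ≤ n := (zpow_le_zpow_iff_right₀ hp1).mp hx1
      refine Set.mem_iUnion.mpr ⟨(n + x.valuation).toNat, ?_⟩
      simp only [hS, Set.mem_setOf_eq]
      rw [Padic.norm_eq_zpow_neg_valuation hx2]
      congr 1
      omega
    have hsub2 : (⋃ k, S k) ⊆ {x : ℚ_[p] | ‖x‖ ≤ (p : ℝ) ^ n} := by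
      intro x hx
      obtain ⟨k, hk⟩ := Set.mem_iUnion.mp hx
      simp only [hS, Set.mem_setOf_eq] at hk ⊢
      rw [hk]
      exact zpow_le_zpow_right₀ hp1.le (by omega)
    have h0 : μ ({x : ℚ_[p] | ‖x‖ ≤ (p : ℝ) ^ n} \ ⋃ k, S k) = 0 := by
      refine measure_mono_null ?_ (measure_zero_singleton p μ hμ)
      intro x hx
      by_contra h0
      exact hx.2 (hsub ⟨hx.1, h0⟩)
    filter_upwards [measure_eq_zero_iff_ae_notMem.mp h0] with x hx
    constructor
    · intro h1
      by_contra h2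
      exact hx ⟨h1, h2⟩
    · exact fun h => hsub2 h
  -- the constant value of log ‖x‖ on S k
  set c : ℕ → ℝ := fun k => ((n:ℝ) - k) * Real.log p with hc
  have hconst : ∀ k : ℕ, Set.EqOn (fun x : ℚ_[p] => Real.log ‖x‖) (fun _ => c k) (S k) := by
    intro k x hx
    simp only [hS, Set.mem_setOf_eq] at hx
    simp only [hc, hx, Real.log_zpow]
    push_cast
    ring
  -- measure of spheres, real version
  have hzpow_toReal : ∀ m : ℤ, ((p : ℝ≥0∞) ^ m).toReal = (p:ℝ) ^ m := by
    intro m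
    have h1 : ((p:ℝ≥0∞)) = ((p:ℝ≥0):ℝ≥0∞) := by norm_cast
    rw [h1, ← ENNReal.coe_zpow (by exact_mod_cast hp.ne_zero), ENNReal.coe_toReal,
      NNReal.coe_zpow, NNReal.coe_natCast]
  have hSfin : ∀ k, μ (S k) ≠ ⊤ := by
    intro k
    rw [show S k = {x : ℚ_[p] | ‖x‖ = (p : ℝ) ^ ((n:ℤ) - k)} from rfl, measure_sphere p μ hμ]
    exact (tsub_le_self.trans_lt (ENNReal.zpow_lt_top
      (by exact_mod_cast hp.ne_zero) (ENNReal.natCast_ne_top p) _)).ne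
  have hSle : ∀ m : ℤ, (p : ℝ≥0∞) ^ (m - 1) ≤ (p : ℝ≥0∞) ^ m := by
    intro m
    apply ENNReal.zpow_le_of_le
    · exact_mod_cast hp.one_lt.le
    · omega
  have hμS : ∀ k : ℕ, (μ (S k)).toReal = (p:ℝ) ^ ((n:ℤ) - k) - (p:ℝ) ^ ((n:ℤ) - k - 1) := by
    intro k
    rw [show S k = {x : ℚ_[p] | ‖x‖ = (p : ℝ) ^ ((n:ℤ) - k)} from rfl, measure_sphere p μ hμ,
      ENNReal.toReal_sub_of_le (hSle _) ((ENNReal.zpow_lt_top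
        (by exact_mod_cast hp.ne_zero) (ENNReal.natCast_ne_top p) _).ne),
      hzpow_toReal, hzpow_toReal]
  -- integral over each sphere
  have hint : ∀ k : ℕ, ∫ x in S k, Real.log ‖x‖ ∂μ = (μ (S k)).toReal * c k := by
    intro k
    rw [setIntegral_congr_fun (hSmeas k) (hconst k), setIntegral_const, smul_eq_mul]; rfl
  have hintnorm : ∀ k : ℕ, ∫ x in S k, ‖Real.log ‖x‖‖ ∂μ = (μ (S k)).toReal * |c k| := by
    intro k
    have : Set.EqOn (fun x : ℚ_[p] => ‖Real.log ‖x‖‖) (fun _ => |c k|) (S k) := by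
      intro x hx
      simp only [Real.norm_eq_abs]
      exact congrArg _ (hconst k hx)
    rw [setIntegral_congr_fun (hSmeas k) this, setIntegral_const, smul_eq_mul]; rfl
  -- geometry of sums
  set r : ℝ := (p:ℝ)⁻¹ with hr
  have hr0 : 0 ≤ r := by positivity
  have hr1 : r < 1 := by
    rw [hr, inv_lt_one_iff₀]; right; exact hp1
  have hrn : ‖r‖ < 1 := by rwa [Real.norm_eq_abs, abs_of_nonneg hr0]
  have hgeom : ∀ k : ℕ, (p:ℝ) ^ ((n:ℤ) - k) = (p:ℝ) ^ (n:ℤ) * r ^ k := by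
    intro k
    rw [zpow_sub₀ hp0.ne', div_eq_mul_inv, hr, ← inv_zpow, zpow_natCast]
  have hmeas_geom : ∀ k : ℕ, (μ (S k)).toReal
      = ((p:ℝ) ^ (n:ℤ) - (p:ℝ) ^ ((n:ℤ) - 1)) * r ^ k := by
    intro k
    rw [hμS k, hgeom k, show ((n:ℤ) - k - 1 : ℤ) = ((n:ℤ) - 1) - (k:ℤ) by ring]
    rw [show ∀ m : ℤ, (p:ℝ) ^ (m - (k:ℤ)) = (p:ℝ) ^ m * r ^ k from fun m => by
      rw [zpow_sub₀ hp0.ne', div_eq_mul_inv, hr, ← inv_zpow, zpow_natCast]]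
    ring
  set C : ℝ := (p:ℝ) ^ (n:ℤ) - (p:ℝ) ^ ((n:ℤ) - 1) with hC
  have hC0 : 0 ≤ C := by
    rw [hC, sub_nonneg]
    exact zpow_le_zpow_right₀ hp1.le (by omega)
  -- summability
  have hs1 : HasSum (fun k : ℕ => r ^ k) (1 - r)⁻¹ := hasSum_geometric_of_lt_one hr0 hr1
  have hs2 : HasSum (fun k : ℕ => (k:ℝ) * r ^ k) (r / (1 - r) ^ 2) :=
    hasSum_coe_mul_geometric_of_norm_lt_one hrn
  have hsum_main : HasSum (fun k : ℕ => ((n:ℝ) - k) * r ^ k)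
      ((n:ℝ) * (1 - r)⁻¹ - r / (1 - r) ^ 2) := by
    have := (hs1.mul_left (n:ℝ)).sub hs2
    convert this using 2 with k
    · rfl
    ring
  have hlogp0 : 0 ≤ Real.log p := Real.log_nonneg hp1.le
  -- summability of the norms
  have hgsum : Summable (fun k : ℕ => (C * Real.log p) * ((|(n:ℝ)| * r ^ k) + (k:ℝ) * r ^ k)) :=
    (((hs1.mul_left _).add hs2).mul_left _).summable
  have hbound : ∀ k : ℕ, ∫ x in S k, ‖Real.log ‖x‖‖ ∂μ
      ≤ (C * Real.log p) * ((|(n:ℝ)| * r ^ k) + (k:ℝ) * r ^ k) := by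
    intro k
    rw [hintnorm k, hmeas_geom k, hc]
    have h1 : |((n:ℝ) - k) * Real.log p| ≤ (|(n:ℝ)| + k) * Real.log p := by
      rw [abs_mul, abs_of_nonneg hlogp0]
      apply mul_le_mul_of_nonneg_right _ hlogp0
      calc |(n:ℝ) - k| ≤ |(n:ℝ)| + |(k:ℝ)| := abs_sub _ _
      _ = |(n:ℝ)| + k := by rw [Nat.abs_cast]
    calc C * r ^ k * |((n:ℝ) - k) * Real.log p|
        ≤ C * r ^ k * ((|(n:ℝ)| + k) * Real.log p) := by
          apply mul_le_mul_of_nonneg_left h1 (by positivity)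
      _ = C * Real.log p * (|(n:ℝ)| * r ^ k + k * r ^ k) := by ring
  have hsummable_norm : Summable (fun k : ℕ => ∫ x in S k, ‖Real.log ‖x‖‖ ∂μ) :=
    Summable.of_nonneg_of_le
      (fun k => setIntegral_nonneg (hSmeas k) (fun x _ => norm_nonneg _)) hbound hgsum
  -- integrability
  have hmeas_f : ∀ k : ℕ, IntegrableOn (fun x : ℚ_[p] => Real.log ‖x‖) (S k) μ := by
    intro k
    rw [integrableOn_congr_fun (hconst k) (hSmeas k)]
    exact integrableOn_const (hSfin k)
  have hInt : IntegrableOn (fun x : ℚ_[p] => Real.log ‖x‖) (⋃ k, S k) μ :=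
    integrableOn_iUnion_of_summable_integral_norm hmeas_f hsummable_norm
  -- put it together
  rw [setIntegral_congr_set hU]
  rw [integral_iUnion hSmeas hSdisj hInt]
  have hterm : ∀ k : ℕ, ∫ x in S k, Real.log ‖x‖ ∂μ
      = (C * Real.log p) * (((n:ℝ) - k) * r ^ k) := by
    intro k
    rw [hint k, hmeas_geom k, hc]
    ring
  rw [tsum_congr hterm, (hsum_main.mul_left (C * Real.log p)).tsum_eq]
  -- final algebra
  have h1r : 1 - r = ((p:ℝ) - 1) / p := by
    rw [hr]; field_simp
  have hCval : C = (p:ℝ) ^ (n:ℤ) * (((p:ℝ) - 1) / p) := by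
    rw [hC, show ((n:ℤ) - 1 : ℤ) = (n:ℤ) + (-1) by ring, zpow_add₀ hp0.ne']
    field_simp
  rw [hCval, h1r]
  have hpm1 : (p:ℝ) - 1 ≠ 0 := by
    intro h
    have : (p:ℝ) = 1 := by linarith
    exact hp1.ne' this
  rw [hr]
  field_simp
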